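/- Let G be a non-complete RAN and T its (unique) clique-tree. Then T has n − 3 vertices and n − 4 edges, the number of leaves of T equals the number of simplicial vertices of G, every vertex of G belonging only to maximal cliques that are internal vertices of T lies in some minimal vertex separator, and every vertex of T has degree at most 4. -/

import Mathlib

open SimpleGraph ENNReal

namespace RanTough

/-- Number of connected components after deleting the vertex set `S` from `G`. -/
noncomputable def compCount {V : Type*} (G : SimpleGraph V) (S : Finset V) : ℕ :=
  Nat.card (G.induce ((↑S : Set V)ᶜ)).ConnectedComponent

/-- `G` is `t`-tough: `t * ω(G - S) ≤ |S|` whenever deleting `S` disconnects `G`. -/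
def IsTough {V : Type*} (G : SimpleGraph V) (t : ℝ≥0∞) : Prop :=
  ∀ S : Finset V, 1 < compCount G S → t * compCount G S ≤ S.card

/-- The toughness of `G`: the largest `t` such that `G` is `t`-tough
(`⊤` for complete graphs). -/
noncomputable def toughness {V : Type*} (G : SimpleGraph V) : ℝ≥0∞ :=
  sSup {t : ℝ≥0∞ | IsTough G t}

/-- A vertex is simplicial if its neighborhood is a clique. -/
def IsSimplicial {V : Type*} (G : SimpleGraph V) (v : V) : Prop :=
  G.IsClique (G.neighborSet v)

/-- `G` is a `k`-tree: there is a construction ordering starting from a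
`(k+1)`-clique in which each later vertex is attached to a `k`-clique
of earlier vertices. -/
def IsKTree {V : Type*} [Fintype V] (k : ℕ) (G : SimpleGraph V) : Prop :=
  k + 1 ≤ Fintype.card V ∧
  ∃ e : Fin (Fintype.card V) ≃ V,
    (∀ i j : Fin (Fintype.card V), (i : ℕ) < k + 1 → (j : ℕ) < k + 1 → i ≠ j →
      G.Adj (e i) (e j)) ∧
    (∀ i : Fin (Fintype.card V), k + 1 ≤ (i : ℕ) →
      ∃ S : Finset V, S.card = k ∧ G.IsClique (S : Set V) ∧
        ∀ w : V, (G.Adj (e i) w ∧ ∃ j, j < i ∧ e j = w) ↔ w ∈ S)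

/-- `Q` is a maximal clique of `G`. -/
def IsMaximalClique {V : Type*} (G : SimpleGraph V) (Q : Finset V) : Prop :=
  G.IsClique (Q : Set V) ∧ ∀ R : Finset V, G.IsClique (R : Set V) → Q ⊆ R → Q = R

/-- A clique-tree of `G`: a tree on the maximal cliques of `G` satisfying the
induced subtree property. -/
def IsCliqueTree {V : Type*} (G : SimpleGraph V)
    (T : SimpleGraph {Q : Finset V // IsMaximalClique G Q}) : Prop :=
  T.IsTree ∧ ∀ v : V,
    (T.induce {Q : {Q : Finset V // IsMaximalClique G Q} | v ∈ (Q : Finset V)}).Connected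

/-- A Random Apollonian Network: a uniquely representable (unique clique-tree) 3-tree. -/
def IsRAN {V : Type*} [Fintype V] (G : SimpleGraph V) : Prop :=
  IsKTree 3 G ∧ ∃! T : SimpleGraph {Q : Finset V // IsMaximalClique G Q}, IsCliqueTree G T

/-- `S` separates the nonadjacent vertices `u` and `v`. -/
def IsUVSeparator {V : Type*} (G : SimpleGraph V) (u v : V) (S : Finset V) : Prop :=
  u ≠ v ∧ ¬ G.Adj u v ∧ u ∉ S ∧ v ∉ S ∧ ∀ p : G.Walk u v, ∃ w ∈ p.support, w ∈ S

/-- `S` is a minimal vertex separator of `G`. -/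
def IsMinVtxSep {V : Type*} (G : SimpleGraph V) (S : Finset V) : Prop :=
  ∃ u v : V, IsUVSeparator G u v S ∧ ∀ S' : Finset V, S' ⊂ S → ¬ IsUVSeparator G u v S'

/-- The multiplicity of `S` as a minimal vertex separator with respect to
the clique-tree `T`: the number of edges of `T` whose endpoint intersection is `S`. -/
noncomputable def sepMultiplicity {V : Type*} [DecidableEq V] (G : SimpleGraph V)
    (T : SimpleGraph {Q : Finset V // IsMaximalClique G Q}) (S : Finset V) : ℕ :=
  {e ∈ T.edgeSet | ∃ Q Q' : {Q : Finset V // IsMaximalClique G Q},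
    e = s(Q, Q') ∧ (Q : Finset V) ∩ (Q' : Finset V) = S}.ncard

/-- Degree of a vertex in a graph, via `Set.ncard` (no instances needed). -/
noncomputable def deg {α : Type*} (T : SimpleGraph α) (q : α) : ℕ :=
  {r | T.Adj q r}.ncard

/-- A `k`-regular tree: every vertex that is not a leaf has degree `k`. -/
def IsRegularTree {α : Type*} (k : ℕ) (T : SimpleGraph α) : Prop :=
  T.IsTree ∧ ∀ q : α, deg T q = 1 ∨ deg T q = k

/-- Chordal: every cycle of length at least 4 has a chord. -/
def IsChordal {V : Type*} (G : SimpleGraph V) : Prop :=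
  ∀ (v : V) (c : G.Walk v v), c.IsCycle → 4 ≤ c.length →
    ∃ x y : V, x ∈ c.support ∧ y ∈ c.support ∧ G.Adj x y ∧ s(x, y) ∉ c.edges

/-- `H` is a minor of `G`. -/
def IsMinor {W V : Type*} (H : SimpleGraph W) (G : SimpleGraph V) : Prop :=
  ∃ B : W → Set V,
    (∀ w, (G.induce (B w)).Connected) ∧
    (∀ w₁ w₂, w₁ ≠ w₂ → Disjoint (B w₁) (B w₂)) ∧
    (∀ w₁ w₂, H.Adj w₁ w₂ → ∃ u ∈ B w₁, ∃ v ∈ B w₂, G.Adj u v)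

/-- Planar (Wagner): no `K₅` and no `K₃,₃` minor. -/
def IsPlanar {V : Type*} (G : SimpleGraph V) : Prop :=
  ¬ IsMinor (⊤ : SimpleGraph (Fin 5)) G ∧
  ¬ IsMinor (completeBipartiteGraph (Fin 3) (Fin 3)) G

end RanTough

open RanTough

set_option linter.unusedSectionVars false

namespace RanProof
open Finset

variable {V : Type*} [Fintype V] [DecidableEq V] {G : SimpleGraph V}
  {e : Fin (Fintype.card V) ≃ V}

/-- The attachment condition of a 3-tree. -/
def H2 (G : SimpleGraph V) (e : Fin (Fintype.card V) ≃ V) : Prop :=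
  ∀ i : Fin (Fintype.card V), 4 ≤ (i : ℕ) →
    ∃ S : Finset V, S.card = 3 ∧ G.IsClique (S : Set V) ∧
      ∀ w : V, (G.Adj (e i) w ∧ ∃ j, j < i ∧ e j = w) ↔ w ∈ S

/-- The initial-clique condition of a 3-tree. -/
def H1 (G : SimpleGraph V) (e : Fin (Fintype.card V) ≃ V) : Prop :=
  ∀ i j : Fin (Fintype.card V), (i : ℕ) < 4 → (j : ℕ) < 4 → i ≠ j → G.Adj (e i) (e j)

lemma isKTree_iff : IsKTree 3 G ↔ 4 ≤ Fintype.card V ∧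
    ∃ e : Fin (Fintype.card V) ≃ V, H1 G e ∧ H2 G e := by
  unfold IsKTree H1 H2
  norm_num

noncomputable def attS (h2 : H2 G e) (i : Fin (Fintype.card V)) (hi : 4 ≤ (i : ℕ)) :
    Finset V := (h2 i hi).choose

lemma attS_card (h2 : H2 G e) (i : Fin (Fintype.card V)) (hi : 4 ≤ (i : ℕ)) :
    (attS h2 i hi).card = 3 := (h2 i hi).choose_spec.1

lemma attS_clique (h2 : H2 G e) (i : Fin (Fintype.card V)) (hi : 4 ≤ (i : ℕ)) :
    G.IsClique (attS h2 i hi : Set V) :=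
  (h2 i hi).choose_spec.2.1

lemma attS_iff (h2 : H2 G e) (i : Fin (Fintype.card V)) (hi : 4 ≤ (i : ℕ)) (w : V) :
    (G.Adj (e i) w ∧ ∃ j, j < i ∧ e j = w) ↔ w ∈ attS h2 i hi :=
  (h2 i hi).choose_spec.2.2 w

lemma lowfilter_card (k : ℕ) (hk : k ≤ Fintype.card V) :
    ((univ : Finset (Fin (Fintype.card V))).filter
      fun i : Fin (Fintype.card V) => (i : ℕ) < k).card = k := by
  have h : ∀ m ∈ Finset.range k, m < Fintype.card V := fun m hm =>
    lt_of_lt_of_le (Finset.mem_range.1 hm) hk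
  have heq : ((univ : Finset (Fin (Fintype.card V))).filter
      fun i : Fin (Fintype.card V) => (i : ℕ) < k) = (Finset.range k).attachFin h := by
    ext i; simp [Finset.mem_attachFin, Finset.mem_range]
  rw [heq, Finset.card_attachFin, Finset.card_range]

lemma clique_card_le (h2 : H2 G e) {C : Finset V} (hC : G.IsClique (C : Set V)) :
    C.card ≤ 4 := by
  by_contra h
  push_neg at h
  have hne : (C.image e.symm).Nonempty :=
    Finset.image_nonempty.2 (Finset.card_pos.1 (by omega))
  set D := C.image e.symm with hD
  set i := D.max' hne with hi
  have hiD : i ∈ D := D.max'_mem hne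
  obtain ⟨v, hvC, hvi⟩ := Finset.mem_image.1 hiD
  have hvi' : v = e i := by rw [← hvi]; simp
  have heiC : e i ∈ C := hvi' ▸ hvC
  by_cases h4 : 4 ≤ (i : ℕ)
  · obtain ⟨S, hS3, hScl, hSiff⟩ := h2 i h4
    have hsub : C.erase (e i) ⊆ S := by
      intro w hw
      obtain ⟨hwne, hwC⟩ := Finset.mem_erase.1 hw
      have hadj : G.Adj (e i) w := hC heiC hwC (fun hh => hwne hh.symm)
      have hj : e.symm w ∈ D := Finset.mem_image_of_mem _ hwC
      have hjle : e.symm w ≤ i := D.le_max' _ hj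
      have hjne : e.symm w ≠ i := by
        intro hh
        apply hwne
        rw [← hh]; simp
      exact (hSiff w).1 ⟨hadj, e.symm w, lt_of_le_of_ne hjle hjne, by simp⟩
    have := Finset.card_le_card hsub
    rw [Finset.card_erase_of_mem heiC, hS3] at this
    omega
  · have hsub : D ⊆ (univ : Finset (Fin (Fintype.card V))).filter
        fun j : Fin (Fintype.card V) => (j : ℕ) < 4 := by
      intro d hd
      simp only [Finset.mem_filter, Finset.mem_univ, true_and]
      have := D.le_max' d hd
      omega
    have hcard : D.card = C.card := Finset.card_image_of_injective _ e.symm.injective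
    have h4n : 4 ≤ Fintype.card V := by
      have := C.card_le_univ
      omega
    have := (Finset.card_le_card hsub).trans_eq (lowfilter_card 4 h4n)
    omega

/-- The initial maximal clique. -/
def Qinit (e : Fin (Fintype.card V) ≃ V) : Finset V :=
  ((univ : Finset (Fin (Fintype.card V))).filter
    fun i : Fin (Fintype.card V) => (i : ℕ) < 4).image e

/-- The maximal clique created by vertex `i`. -/
noncomputable def Qat (h2 : H2 G e) (i : Fin (Fintype.card V)) (hi : 4 ≤ (i : ℕ)) : Finset V :=
  insert (e i) (attS h2 i hi)

lemma mem_Qinit {v : V} : v ∈ Qinit e ↔ (e.symm v : ℕ) < 4 := by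
  constructor
  · rintro hv
    obtain ⟨j, hj, rfl⟩ := Finset.mem_image.1 hv
    simpa using (Finset.mem_filter.1 hj).2
  · intro hv
    exact Finset.mem_image.2 ⟨e.symm v, by simp [hv], by simp⟩

lemma Qinit_card (hn : 4 ≤ Fintype.card V) : (Qinit e).card = 4 := by
  rw [Qinit, Finset.card_image_of_injective _ e.injective, lowfilter_card 4 hn]

lemma Qinit_clique (h1 : H1 G e) : G.IsClique ((Qinit e : Finset V) : Set V) := by
  intro x hx y hy hxy
  have hx' := mem_Qinit.1 hx
  have hy' := mem_Qinit.1 hy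
  have := h1 (e.symm x) (e.symm y) hx' hy' (fun h => hxy (by simpa using congrArg e h))
  simpa using this

lemma eS_not_mem_attS (h2 : H2 G e) (i : Fin (Fintype.card V)) (hi : 4 ≤ (i : ℕ)) :
    e i ∉ attS h2 i hi := by
  intro h
  obtain ⟨-, j, hj, hje⟩ := (attS_iff h2 i hi _).2 h
  exact absurd (e.injective hje) (Fin.ne_of_lt hj)

lemma Qat_card (h2 : H2 G e) (i : Fin (Fintype.card V)) (hi : 4 ≤ (i : ℕ)) :
    (Qat h2 i hi).card = 4 := by
  rw [Qat, Finset.card_insert_of_notMem (eS_not_mem_attS h2 i hi), attS_card]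

lemma Qat_clique (h2 : H2 G e) (i : Fin (Fintype.card V)) (hi : 4 ≤ (i : ℕ)) :
    G.IsClique ((Qat h2 i hi : Finset V) : Set V) := by
  rw [Qat, Finset.coe_insert]
  refine (attS_clique h2 i hi).insert fun w hw _ => ?_
  exact ((attS_iff h2 i hi w).2 hw).1

lemma maxclique_of_clique_card4 (h2 : H2 G e) {C : Finset V}
    (hC : G.IsClique (C : Set V)) (hc4 : C.card = 4) : IsMaximalClique G C := by
  refine ⟨hC, fun R hR hsub => Finset.eq_of_subset_of_card_le hsub ?_⟩
  rw [hc4]; exact clique_card_le h2 hR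

lemma Qinit_maxclique (h1 : H1 G e) (h2 : H2 G e) (hn : 4 ≤ Fintype.card V) :
    IsMaximalClique G (Qinit e) :=
  maxclique_of_clique_card4 h2 (Qinit_clique h1) (Qinit_card hn)

lemma Qat_maxclique (h2 : H2 G e) (i : Fin (Fintype.card V)) (hi : 4 ≤ (i : ℕ)) :
    IsMaximalClique G (Qat h2 i hi) :=
  maxclique_of_clique_card4 h2 (Qat_clique h2 i hi) (Qat_card h2 i hi)


lemma maxclique_nonempty (h1 : H1 G e) (h2 : H2 G e) (hn : 4 ≤ Fintype.card V)
    {Q : Finset V} (hQ : IsMaximalClique G Q) : Q.Nonempty := by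
  rcases Q.eq_empty_or_nonempty with h | h
  · subst h
    have := hQ.2 (Qinit e) (Qinit_clique h1) (Finset.empty_subset _)
    have hc := Qinit_card (e := e) hn
    rw [← this] at hc
    simp at hc
  · exact h

/-- maximal index of a nonempty finset of vertices -/
noncomputable def midx (e : Fin (Fintype.card V) ≃ V) (Q : Finset V) (hne : Q.Nonempty) :
    Fin (Fintype.card V) := (Q.image e.symm).max' (hne.image _)

lemma e_midx_mem {Q : Finset V} (hne : Q.Nonempty) : e (midx e Q hne) ∈ Q := by
  have := (Q.image e.symm).max'_mem (hne.image _)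
  obtain ⟨v, hv, hvi⟩ := Finset.mem_image.1 this
  rw [midx, ← hvi]
  simpa using hv

lemma le_midx {Q : Finset V} (hne : Q.Nonempty) {w : V} (hw : w ∈ Q) :
    e.symm w ≤ midx e Q hne :=
  (Q.image e.symm).le_max' _ (Finset.mem_image_of_mem _ hw)

lemma attS_idx_lt (h2 : H2 G e) (i : Fin (Fintype.card V)) (hi : 4 ≤ (i : ℕ)) {w : V}
    (hw : w ∈ attS h2 i hi) : e.symm w < i := by
  obtain ⟨-, j, hj, hje⟩ := (attS_iff h2 i hi _).2 hw
  rw [← hje]; simpa using hj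

lemma maxclique_eq_Qat (h2 : H2 G e) {Q : Finset V} (hQ : IsMaximalClique G Q)
    (hne : Q.Nonempty) (h4 : 4 ≤ ((midx e Q hne : Fin (Fintype.card V)) : ℕ)) :
    Q = Qat h2 (midx e Q hne) h4 := by
  set i := midx e Q hne with hidef
  apply hQ.2 _ (Qat_clique h2 i h4)
  intro w hw
  rcases eq_or_ne w (e i) with rfl | hne'
  · exact Finset.mem_insert_self _ _
  · apply Finset.mem_insert_of_mem
    have hadj : G.Adj (e i) w := hQ.1 (e_midx_mem hne) hw (fun hh => hne' hh.symm)
    have hlt : e.symm w < i := lt_of_le_of_ne (le_midx hne hw)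
      (fun hh => hne' (by rw [← hh]; simp))
    exact (attS_iff h2 i h4 w).1 ⟨hadj, e.symm w, hlt, by simp⟩

lemma maxclique_eq_Qinit (h1 : H1 G e) {Q : Finset V} (hQ : IsMaximalClique G Q)
    (hne : Q.Nonempty) (h4 : ((midx e Q hne : Fin (Fintype.card V)) : ℕ) < 4) :
    Q = Qinit e := by
  apply hQ.2 _ (Qinit_clique h1)
  intro w hw
  have hle := le_midx (e := e) hne hw
  rw [Fin.le_def] at hle
  exact mem_Qinit.2 (by omega)

lemma midx_Qat (h2 : H2 G e) (i : Fin (Fintype.card V)) (hi : 4 ≤ (i : ℕ))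
    (hne : (Qat h2 i hi).Nonempty) : midx e (Qat h2 i hi) hne = i := by
  apply le_antisymm
  · apply Finset.max'_le
    intro j hj
    obtain ⟨w, hw, rfl⟩ := Finset.mem_image.1 hj
    rcases Finset.mem_insert.1 hw with rfl | hw'
    · simp
    · exact le_of_lt (attS_idx_lt h2 i hi hw')
  · have : e i ∈ Qat h2 i hi := Finset.mem_insert_self _ _
    have := le_midx (e := e) hne this
    simpa using this

lemma midx_Qinit (hn : 4 ≤ Fintype.card V) (hne : (Qinit e).Nonempty) :
    ((midx e (Qinit e) hne : Fin (Fintype.card V)) : ℕ) = 3 := by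
  apply le_antisymm
  · have h4 : ((midx e (Qinit e) hne : Fin (Fintype.card V)) : ℕ) < 4 := by
      have := e_midx_mem (e := e) hne
      have := mem_Qinit.1 this
      simpa using this
    omega
  · have h3 : (⟨3, by omega⟩ : Fin (Fintype.card V)) = e.symm (e ⟨3, by omega⟩) := by simp
    have hmem : e ⟨3, by omega⟩ ∈ Qinit e := mem_Qinit.2 (by simp)
    have := le_midx (e := e) hne hmem
    rw [← h3] at this
    exact this

lemma maxclique_card (h1 : H1 G e) (h2 : H2 G e) (hn : 4 ≤ Fintype.card V)
    {Q : Finset V} (hQ : IsMaximalClique G Q) : Q.card = 4 := by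
  have hne := maxclique_nonempty h1 h2 hn hQ
  by_cases h4 : 4 ≤ ((midx e Q hne : Fin (Fintype.card V)) : ℕ)
  · rw [maxclique_eq_Qat h2 hQ hne h4]; exact Qat_card h2 _ h4
  · rw [maxclique_eq_Qinit h1 hQ hne (by omega)]; exact Qinit_card hn

lemma three_le_midx (h1 : H1 G e) (h2 : H2 G e) (hn : 4 ≤ Fintype.card V)
    {Q : Finset V} (hQ : IsMaximalClique G Q) (hne : Q.Nonempty) :
    3 ≤ ((midx e Q hne : Fin (Fintype.card V)) : ℕ) := by
  have hc : (Q.image e.symm).card = 4 := by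
    rw [Finset.card_image_of_injective _ e.symm.injective]
    exact maxclique_card h1 h2 hn hQ
  have hsub : (Q.image e.symm).image Fin.val ⊆
      Finset.range (((midx e Q hne : Fin (Fintype.card V)) : ℕ) + 1) := by
    intro m hm
    obtain ⟨j, hj, rfl⟩ := Finset.mem_image.1 hm
    have := (Q.image e.symm).le_max' j hj
    rw [Finset.mem_range]
    have : (j : ℕ) ≤ ((midx e Q hne : Fin (Fintype.card V)) : ℕ) := this
    omega
  have := Finset.card_le_card hsub
  rw [Finset.card_image_of_injective _ Fin.val_injective, hc, Finset.card_range] at this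
  omega

lemma card_maxcliques (h1 : H1 G e) (h2 : H2 G e) (hn : 4 ≤ Fintype.card V) :
    Nat.card {Q : Finset V // IsMaximalClique G Q} = Fintype.card V - 3 := by
  classical
  have key : ∀ Q : {Q : Finset V // IsMaximalClique G Q}, Q.1.Nonempty :=
    fun Q => maxclique_nonempty h1 h2 hn Q.2
  set f : {Q : Finset V // IsMaximalClique G Q} → {i : Fin (Fintype.card V) // 3 ≤ (i : ℕ)} :=
    fun Q => ⟨midx e Q.1 (key Q), three_le_midx h1 h2 hn Q.2 (key Q)⟩ with hf
  have hbij : Function.Bijective f := by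
    constructor
    · rintro ⟨Q, hQ⟩ ⟨R, hR⟩ hQR
      simp only [hf, Subtype.mk.injEq] at hQR
      apply Subtype.ext
      simp only
      by_cases h4 : 4 ≤ ((midx e Q (key ⟨Q, hQ⟩) : Fin (Fintype.card V)) : ℕ)
      · have hQ' := maxclique_eq_Qat h2 hQ (key ⟨Q, hQ⟩) h4
        have h4R : 4 ≤ ((midx e R (key ⟨R, hR⟩) : Fin (Fintype.card V)) : ℕ) := by
          rw [← hQR]; exact h4
        have hR' := maxclique_eq_Qat h2 hR (key ⟨R, hR⟩) h4R
        rw [hQ', hR']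
        congr 1
      · have hQ' := maxclique_eq_Qinit h1 hQ (key ⟨Q, hQ⟩) (by omega)
        have h4R : ¬ 4 ≤ ((midx e R (key ⟨R, hR⟩) : Fin (Fintype.card V)) : ℕ) := by
          rw [← hQR]; exact h4
        have hR' := maxclique_eq_Qinit h1 hR (key ⟨R, hR⟩) (by omega)
        rw [hQ', hR']
    · rintro ⟨i, hi3⟩
      by_cases h4 : 4 ≤ (i : ℕ)
      · refine ⟨⟨Qat h2 i h4, Qat_maxclique h2 i h4⟩, ?_⟩
        simp only [hf, Subtype.mk.injEq]
        exact midx_Qat h2 i h4 _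
      · have hi : i = ⟨3, by omega⟩ := by
          apply Fin.ext; simp; omega
        refine ⟨⟨Qinit e, Qinit_maxclique h1 h2 hn⟩, ?_⟩
        simp only [hf, Subtype.mk.injEq]
        apply Fin.ext
        rw [midx_Qinit hn, hi]
  rw [Nat.card_eq_of_bijective f hbij]
  rw [Nat.card_eq_fintype_card, Fintype.card_subtype]
  have h3 : ((univ : Finset (Fin (Fintype.card V))).filter
      fun i : Fin (Fintype.card V) => (i : ℕ) < 3).card = 3 := lowfilter_card 3 (by omega)
  have hre : ((univ : Finset (Fin (Fintype.card V))).filter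
      fun i : Fin (Fintype.card V) => 3 ≤ (i : ℕ))
      = ((univ : Finset (Fin (Fintype.card V))).filter
      fun i : Fin (Fintype.card V) => ¬ (i : ℕ) < 3) := by
    apply Finset.filter_congr
    intro i _
    simp [Nat.not_lt]
  rw [hre, Finset.filter_not, Finset.card_sdiff_of_subset (Finset.filter_subset _ _), h3]
  simp


lemma exists_maxclique_superset {C : Finset V} (hC : G.IsClique (C : Set V)) :
    ∃ Q : Finset V, IsMaximalClique G Q ∧ C ⊆ Q := by
  classical
  set s := (univ : Finset (Finset V)).filter (fun R : Finset V => G.IsClique (R : Set V) ∧ C ⊆ R) with hs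
  have hCs : C ∈ s := by simp [hs, hC]
  obtain ⟨Q, hQs, hQmax⟩ := Finset.exists_max_image s Finset.card ⟨C, hCs⟩
  simp only [hs, Finset.mem_filter] at hQs
  refine ⟨Q, ⟨hQs.2.1, fun R hR hsub => ?_⟩, hQs.2.2⟩
  refine Finset.eq_of_subset_of_card_le hsub (hQmax R ?_)
  simp [hs, hR, hQs.2.2.trans hsub]

lemma edge_maxclique {u v : V} (huv : G.Adj u v) :
    ∃ Q : Finset V, IsMaximalClique G Q ∧ u ∈ Q ∧ v ∈ Q := by
  have hC : G.IsClique (({u, v} : Finset V) : Set V) := by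
    simp only [Finset.coe_insert, Finset.coe_singleton]
    exact isClique_pair.2 (fun _ => huv)
  obtain ⟨Q, hQ, hsub⟩ := exists_maxclique_superset hC
  exact ⟨Q, hQ, hsub (by simp), hsub (by simp)⟩

lemma vertex_maxclique (v : V) : ∃ Q : Finset V, IsMaximalClique G Q ∧ v ∈ Q := by
  have hC : G.IsClique (({v} : Finset V) : Set V) := by simp
  obtain ⟨Q, hQ, hsub⟩ := exists_maxclique_superset hC
  exact ⟨Q, hQ, hsub (by simp)⟩

lemma reach_low (h2 : H2 G e) (X : Finset V) (hX : X.card ≤ 2) :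
    ∀ (k : ℕ) (v : V) (hv : v ∈ ((X : Set V))ᶜ), ((e.symm v : Fin (Fintype.card V)) : ℕ) = k →
    ∃ (u : V) (hu : u ∈ ((X : Set V))ᶜ), ((e.symm u : Fin (Fintype.card V)) : ℕ) < 4 ∧
      (G.induce ((X : Set V))ᶜ).Reachable ⟨v, hv⟩ ⟨u, hu⟩ := by
  intro k
  induction k using Nat.strong_induction_on with
  | _ k ih =>
    intro v hv hk
    by_cases h4 : ((e.symm v : Fin (Fintype.card V)) : ℕ) < 4
    · exact ⟨v, hv, h4, Reachable.refl _⟩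
    · push_neg at h4
      set i := e.symm v with hidef
      have hSX : (attS h2 i h4 \ X).Nonempty := by
        apply Finset.card_pos.1
        have := Finset.le_card_sdiff X (attS h2 i h4)
        rw [attS_card] at this
        omega
      obtain ⟨w, hw⟩ := hSX
      have hwS : w ∈ attS h2 i h4 := (Finset.mem_sdiff.1 hw).1
      have hwX : w ∉ X := (Finset.mem_sdiff.1 hw).2
      have hadj : G.Adj v w := by
        have := ((attS_iff h2 i h4 w).2 hwS).1
        rwa [hidef, Equiv.apply_symm_apply] at this
      have hlt : ((e.symm w : Fin (Fintype.card V)) : ℕ) < k := by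
        have := attS_idx_lt h2 i h4 hwS
        rw [Fin.lt_def] at this
        omega
      have hw' : w ∈ ((X : Set V))ᶜ := by simpa using hwX
      obtain ⟨u, hu, hlow, hre⟩ := ih _ hlt w hw' rfl
      refine ⟨u, hu, hlow, Reachable.trans ?_ hre⟩
      exact Adj.reachable (by exact hadj)

lemma del2_connected (h1 : H1 G e) (h2 : H2 G e) (hn : 4 ≤ Fintype.card V)
    (X : Finset V) (hX : X.card ≤ 2) : (G.induce ((X : Set V))ᶜ).Connected := by
  have hQX : (Qinit e \ X).Nonempty := by
    apply Finset.card_pos.1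
    have := Finset.le_card_sdiff X (Qinit e)
    rw [Qinit_card hn] at this
    omega
  obtain ⟨w0, hw0⟩ := hQX
  have hw0' : w0 ∈ ((X : Set V))ᶜ := by
    simpa using (Finset.mem_sdiff.1 hw0).2
  haveI : Nonempty (((X : Set V))ᶜ : Set V) := ⟨⟨w0, hw0'⟩⟩
  refine ⟨?_⟩
  rintro ⟨va, hva⟩ ⟨vb, hvb⟩
  obtain ⟨ua, hua, hla, hra⟩ := reach_low h2 X hX _ va hva rfl
  obtain ⟨ub, hub, hlb, hrb⟩ := reach_low h2 X hX _ vb hvb rfl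
  have hmid : (G.induce ((X : Set V))ᶜ).Reachable ⟨ua, hua⟩ ⟨ub, hub⟩ := by
    rcases eq_or_ne ua ub with rfl | hne
    · exact Reachable.refl _
    · apply Adj.reachable
      have : G.Adj ua ub := by
        have := h1 (e.symm ua) (e.symm ub) hla hlb
          (fun h => hne (by simpa using congrArg e h))
        simpa using this
      exact this
  exact (hra.trans hmid).trans hrb.symm

lemma five_le_card (h1 : H1 G e) (hn : 4 ≤ Fintype.card V) (hnc : G ≠ ⊤) :
    5 ≤ Fintype.card V := by
  by_contra h
  have hn4 : Fintype.card V = 4 := by omega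
  apply hnc
  ext x y
  simp only [top_adj]
  constructor
  · exact Adj.ne
  · intro hne
    have hx : ((e.symm x : Fin (Fintype.card V)) : ℕ) < 4 := by
      have := (e.symm x).isLt; omega
    have hy : ((e.symm y : Fin (Fintype.card V)) : ℕ) < 4 := by
      have := (e.symm y).isLt; omega
    have := h1 (e.symm x) (e.symm y) hx hy
      (fun hh => hne (by simpa using congrArg e hh))
    simpa using this


lemma reach_of_adj_reach {α : Type*} {A B : SimpleGraph α}
    (h : ∀ x y, A.Adj x y → B.Reachable x y) {a b : α} (r : A.Reachable a b) :
    B.Reachable a b := by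
  obtain ⟨p⟩ := r
  induction p with
  | nil => exact Reachable.refl _
  | cons ha q ih => exact (h _ _ ha).trans ih

variable {T : SimpleGraph {Q : Finset V // IsMaximalClique G Q}}

lemma reach_del (hT : IsCliqueTree G T) {Q Q' R R' : {Q : Finset V // IsMaximalClique G Q}}
    {x : V} (hx : x ∈ (R : Finset V)) (hx' : x ∈ (R' : Finset V))
    (hxS : x ∉ (Q : Finset V) ∩ (Q' : Finset V)) :
    (T.deleteEdges {s(Q, Q')}).Reachable R R' := by
  have hre : (T.induce {q : {Q : Finset V // IsMaximalClique G Q} | x ∈ (q : Finset V)}).Reachable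
      ⟨R, hx⟩ ⟨R', hx'⟩ := (hT.2 x).preconnected _ _
  obtain ⟨p⟩ := hre
  let emb := SimpleGraph.Embedding.induce
    (G := T) {q : {Q : Finset V // IsMaximalClique G Q} | x ∈ (q : Finset V)}
  have hedges : ∀ e' ∈ (p.map emb.toHom).edges, e' ∉ ({s(Q, Q')} : Set _) := by
    intro e' he' hmem
    rw [Set.mem_singleton_iff] at hmem
    subst hmem
    rw [Walk.edges_map, List.mem_map] at he'
    obtain ⟨a, ha, hae⟩ := he'
    induction a with
    | h y z =>
      simp only [Sym2.map_pair_eq, Sym2.eq, Sym2.rel_iff', Prod.mk.injEq, Prod.swap_prod_mk]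
        at hae
      apply hxS
      rw [Finset.mem_inter]
      rcases hae with ⟨hy, hz⟩ | ⟨hy, hz⟩
      · exact ⟨hy ▸ y.2, hz ▸ z.2⟩
      · exact ⟨hz ▸ z.2, hy ▸ y.2⟩
  exact ⟨(p.map emb.toHom).toDeleteEdges _ hedges⟩

lemma tree_bridge (hT : IsCliqueTree G T) {Q Q' : {Q : Finset V // IsMaximalClique G Q}}
    (hadj : T.Adj Q Q') : ¬ (T.deleteEdges {s(Q, Q')}).Reachable Q Q' := by
  have hb : T.IsBridge s(Q, Q') :=
    (isAcyclic_iff_forall_edge_isBridge.1 hT.1.IsAcyclic) ((SimpleGraph.mem_edgeSet T).2 hadj)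
  exact isBridge_iff.1 hb

lemma walk_hits_sep (hT : IsCliqueTree G T) {Q Q' : {Q : Finset V // IsMaximalClique G Q}}
    (hadj : T.Adj Q Q') {u w : V} (hu : u ∈ (Q : Finset V)) (hu' : u ∉ (Q' : Finset V))
    (hw : w ∈ (Q' : Finset V)) (hw' : w ∉ (Q : Finset V)) (p : G.Walk u w) :
    ∃ x ∈ p.support, x ∈ (Q : Finset V) ∩ (Q' : Finset V) := by
  by_contra hcon
  push_neg at hcon
  have main : ∀ (a b : V) (q : G.Walk a b),
      (∀ x ∈ q.support, x ∉ (Q : Finset V) ∩ (Q' : Finset V)) →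
      (∀ R : {Q : Finset V // IsMaximalClique G Q}, a ∈ (R : Finset V) →
        (T.deleteEdges {s(Q, Q')}).Reachable R Q) →
      (∀ R : {Q : Finset V // IsMaximalClique G Q}, b ∈ (R : Finset V) →
        (T.deleteEdges {s(Q, Q')}).Reachable R Q) := by
    intro a b q
    induction q with
    | nil => exact fun _ h => h
    | @cons a y b hab q ih =>
      intro hsup ha
      apply ih
      · intro x hx; exact hsup x (by simp [hx])
      · intro R hyR
        obtain ⟨Rst, hRst, haRst, hyRst⟩ := edge_maxclique hab
        have hr1 : (T.deleteEdges {s(Q, Q')}).Reachable R ⟨Rst, hRst⟩ :=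
          reach_del hT hyR hyRst (hsup y (by simp))
        have hr2 := ha ⟨Rst, hRst⟩ haRst
        exact hr1.trans hr2
  have hstart : ∀ R : {Q : Finset V // IsMaximalClique G Q}, u ∈ (R : Finset V) →
      (T.deleteEdges {s(Q, Q')}).Reachable R Q := by
    intro R huR
    exact reach_del hT huR hu (fun hmem => hu' (Finset.mem_inter.1 hmem).2)
  have hend := main u w p hcon hstart Q' hw
  exact tree_bridge hT hadj hend.symm

lemma induce_reachable_to_walk {s : Set V} {a b : V} (ha : a ∈ s) (hb : b ∈ s)
    (h : (G.induce s).Reachable ⟨a, ha⟩ ⟨b, hb⟩) :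
    ∃ p : G.Walk a b, ∀ x ∈ p.support, x ∈ s := by
  obtain ⟨p⟩ := h
  let emb := SimpleGraph.Embedding.induce (G := G) s
  refine ⟨p.map emb.toHom, ?_⟩
  intro x hx
  have hx : x ∈ (p.map emb.toHom).support := hx
  rw [Walk.support_map, List.mem_map] at hx
  obtain ⟨z, hz, rfl⟩ := hx
  exact z.2

lemma tree_edge_inter (h1 : H1 G e) (h2 : H2 G e) (hn : 4 ≤ Fintype.card V)
    (hT : IsCliqueTree G T) {Q Q' : {Q : Finset V // IsMaximalClique G Q}}
    (hadj : T.Adj Q Q') :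
    ((Q : Finset V) ∩ (Q' : Finset V)).card = 3 ∧
    ∃ u w : V, u ∈ (Q : Finset V) ∧ u ∉ (Q' : Finset V) ∧ w ∈ (Q' : Finset V) ∧
      w ∉ (Q : Finset V) ∧ u ≠ w ∧ ¬ G.Adj u w := by
  have hQ4 : (Q : Finset V).card = 4 := maxclique_card h1 h2 hn Q.2
  have hQ'4 : (Q' : Finset V).card = 4 := maxclique_card h1 h2 hn Q'.2
  have hne1 : (Q : Finset V) ≠ (Q' : Finset V) := fun h => hadj.ne (Subtype.ext h)
  have hinter_le : ((Q : Finset V) ∩ (Q' : Finset V)).card ≤ 3 := by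
    by_contra hc
    push_neg at hc
    have heq : (Q : Finset V) ∩ (Q' : Finset V) = (Q : Finset V) :=
      Finset.eq_of_subset_of_card_le Finset.inter_subset_left (by omega)
    have hsub : (Q : Finset V) ⊆ (Q' : Finset V) := by
      rw [← heq]; exact Finset.inter_subset_right
    exact hne1 (Q.2.2 _ Q'.2.1 hsub)
  have hpair : ∃ u w : V, u ∈ (Q : Finset V) ∧ u ∉ (Q' : Finset V) ∧ w ∈ (Q' : Finset V) ∧
      w ∉ (Q : Finset V) ∧ u ≠ w ∧ ¬ G.Adj u w := by
    by_contra hc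
    push_neg at hc
    have hclique : G.IsClique (((Q : Finset V) ∪ (Q' : Finset V) : Finset V) : Set V) := by
      intro x hx y hy hxy
      simp only [Finset.coe_union, Set.mem_union, Finset.mem_coe] at hx hy
      by_cases hxQ : x ∈ (Q : Finset V)
      · by_cases hyQ : y ∈ (Q : Finset V)
        · exact Q.2.1 hxQ hyQ hxy
        · have hyQ' : y ∈ (Q' : Finset V) := hy.resolve_left hyQ
          by_cases hxQ' : x ∈ (Q' : Finset V)
          · exact Q'.2.1 hxQ' hyQ' hxy
          · exact hc x y hxQ hxQ' hyQ' hyQ hxy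
      · have hxQ' : x ∈ (Q' : Finset V) := hx.resolve_left hxQ
        by_cases hyQ' : y ∈ (Q' : Finset V)
        · exact Q'.2.1 hxQ' hyQ' hxy
        · have hyQ : y ∈ (Q : Finset V) := hy.resolve_right hyQ'
          exact (hc y x hyQ hyQ' hxQ' hxQ (Ne.symm hxy)).symm
    have hcard := clique_card_le h2 hclique
    have := Finset.card_union_add_card_inter (Q : Finset V) (Q' : Finset V)
    omega
  refine ⟨?_, hpair⟩
  by_contra hc
  have hle2 : ((Q : Finset V) ∩ (Q' : Finset V)).card ≤ 2 := by omega
  obtain ⟨u, w, hu, hu', hw, hw', hune, hnadj⟩ := hpair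
  have hconn := del2_connected h1 h2 hn ((Q : Finset V) ∩ (Q' : Finset V)) hle2
  have huc : u ∈ ((((Q : Finset V) ∩ (Q' : Finset V) : Finset V) : Set V))ᶜ := by
    simp only [Set.mem_compl_iff, Finset.coe_inter, Set.mem_inter_iff, Finset.mem_coe]
    tauto
  have hwc : w ∈ ((((Q : Finset V) ∩ (Q' : Finset V) : Finset V) : Set V))ᶜ := by
    simp only [Set.mem_compl_iff, Finset.coe_inter, Set.mem_inter_iff, Finset.mem_coe]
    tauto
  obtain ⟨p, hp⟩ := induce_reachable_to_walk huc hwc (hconn.preconnected _ _)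
  obtain ⟨x, hxsup, hxmem⟩ := walk_hits_sep hT hadj hu hu' hw hw' p
  have := hp x hxsup
  simp only [Set.mem_compl_iff, Finset.coe_inter, Set.mem_inter_iff, Finset.mem_coe] at this
  rw [Finset.mem_inter] at hxmem
  tauto

lemma minsep_of_tree_edge (h1 : H1 G e) (h2 : H2 G e) (hn : 4 ≤ Fintype.card V)
    (hT : IsCliqueTree G T) {Q Q' : {Q : Finset V // IsMaximalClique G Q}}
    (hadj : T.Adj Q Q') :
    IsMinVtxSep G ((Q : Finset V) ∩ (Q' : Finset V)) := by
  obtain ⟨hcard3, u, w, hu, hu', hw, hw', hune, hnadj⟩ := tree_edge_inter h1 h2 hn hT hadj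
  refine ⟨u, w, ⟨hune, hnadj, ?_, ?_, fun p => ?_⟩, ?_⟩
  · rw [Finset.mem_inter]; tauto
  · rw [Finset.mem_inter]; tauto
  · exact walk_hits_sep hT hadj hu hu' hw hw' p
  · rintro S' hS' ⟨-, -, huS', hwS', hsep⟩
    have hle2 : S'.card ≤ 2 := by
      have h1c := Finset.card_lt_card hS'
      omega
    have hconn := del2_connected h1 h2 hn S' hle2
    have huc : u ∈ ((S' : Set V))ᶜ := by simpa using huS'
    have hwc : w ∈ ((S' : Set V))ᶜ := by simpa using hwS'
    obtain ⟨p, hp⟩ := induce_reachable_to_walk huc hwc (hconn.preconnected _ _)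
    obtain ⟨x, hxsup, hxS'⟩ := hsep p
    have := hp x hxsup
    simp only [Set.mem_compl_iff, Finset.mem_coe] at this
    exact this hxS'

lemma neighbor_inter_inj
    (hU : ∀ T' : SimpleGraph {Q : Finset V // IsMaximalClique G Q}, IsCliqueTree G T' → T' = T)
    (hT : IsCliqueTree G T) {Q Q1 Q2 : {Q : Finset V // IsMaximalClique G Q}}
    (hadj1 : T.Adj Q Q1) (hadj2 : T.Adj Q Q2) (hne : Q1 ≠ Q2)
    (hSS : (Q : Finset V) ∩ (Q1 : Finset V) = (Q : Finset V) ∩ (Q2 : Finset V)) : False := by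
  classical
  set T' : SimpleGraph {Q : Finset V // IsMaximalClique G Q} :=
    T.deleteEdges {s(Q, Q2)} ⊔ fromEdgeSet {s(Q1, Q2)} with hT'def
  have hQQ1 : Q ≠ Q1 := hadj1.ne
  have hQQ2 : Q ≠ Q2 := hadj2.ne
  have hT'adj : ∀ a b, T'.Adj a b ↔
      (T.Adj a b ∧ s(a, b) ≠ s(Q, Q2)) ∨ (s(a, b) = s(Q1, Q2) ∧ a ≠ b) := by
    intro a b
    simp [hT'def, sup_adj, deleteEdges_adj, fromEdgeSet_adj]
  have hadj12' : T'.Adj Q1 Q2 := (hT'adj _ _).2 (Or.inr ⟨rfl, hne⟩)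
  have hadjQ1' : T'.Adj Q Q1 := by
    refine (hT'adj _ _).2 (Or.inl ⟨hadj1, ?_⟩)
    simp only [ne_eq, Sym2.eq_iff, not_or, not_and]
    exact ⟨fun _ => hne, fun h _ => hQQ2 h⟩
  have hnadjQ2' : ¬ T'.Adj Q Q2 := by
    rw [hT'adj]
    rintro (⟨-, h⟩ | ⟨h, -⟩)
    · exact h rfl
    · rw [Sym2.eq_iff] at h
      rcases h with ⟨h, -⟩ | ⟨-, h⟩
      · exact hQQ1 h
      · exact hne h.symm
  -- connectivity of T'
  have hadjre : ∀ a b, T.Adj a b → T'.Reachable a b := by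
    intro a b hab
    by_cases heq : s(a, b) = s(Q, Q2)
    · rw [Sym2.eq_iff] at heq
      rcases heq with ⟨rfl, rfl⟩ | ⟨rfl, rfl⟩
      · exact (hadjQ1'.reachable).trans hadj12'.reachable
      · exact ((hadjQ1'.reachable).trans hadj12'.reachable).symm
    · exact Adj.reachable ((hT'adj _ _).2 (Or.inl ⟨hab, heq⟩))
  have hconn' : T'.Connected := by
    haveI : Nonempty {Q : Finset V // IsMaximalClique G Q} := hT.1.isConnected.nonempty
    refine ⟨?_⟩
    intro a b
    exact reach_of_adj_reach hadjre (hT.1.isConnected.preconnected a b)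
  -- acyclicity of T'
  have hacy' : T'.IsAcyclic := by
    intro v c hcyc
    by_cases hmem : s(Q1, Q2) ∈ c.edges
    · have hreach : (T'.deleteEdges {s(Q1, Q2)}).Reachable Q1 Q2 := by
        by_contra hre
        have hb : T'.IsBridge s(Q1, Q2) := isBridge_iff.2 hre
        exact (isBridge_iff_forall_cycle_notMem (T'.mem_edgeSet.2 hadj12')).1 hb c hcyc hmem
      have hle : T'.deleteEdges {s(Q1, Q2)} ≤ T.deleteEdges {s(Q, Q2)} := by
        intro a b hab
        rw [deleteEdges_adj] at hab
        obtain ⟨hab', hne12⟩ := hab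
        rcases (hT'adj _ _).1 hab' with ⟨hTab, hneQ2⟩ | ⟨heq, -⟩
        · rw [deleteEdges_adj]
          exact ⟨hTab, by simpa using hneQ2⟩
        · exact absurd heq (by simpa using hne12)
      have hre2 : (T.deleteEdges {s(Q, Q2)}).Reachable Q1 Q2 := hreach.mono hle
      have hre3 : (T.deleteEdges {s(Q, Q2)}).Reachable Q Q1 := by
        apply Adj.reachable
        rw [deleteEdges_adj]
        refine ⟨hadj1, ?_⟩
        simp only [Set.mem_singleton_iff, Sym2.eq_iff, not_or, not_and]
        exact ⟨fun _ => hne, fun h _ => hQQ2 h⟩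
      exact tree_bridge hT hadj2 (hre3.trans hre2)
    · have hedges : ∀ e' ∈ c.edges, e' ∈ T.edgeSet := by
        intro e' he'
        have h1' : e' ∈ T'.edgeSet := c.edges_subset_edgeSet he'
        have h2' : e' ≠ s(Q1, Q2) := fun h => hmem (h ▸ he')
        rw [hT'def, edgeSet_sup, edgeSet_deleteEdges, edgeSet_fromEdgeSet] at h1'
        rcases h1' with h1' | h1'
        · exact h1'.1
        · exact absurd h1'.1 h2'
      exact hT.1.IsAcyclic (c.transfer T hedges) (hcyc.transfer hedges)
  -- induced subtree property of T'
  have hind' : ∀ v : V, (T'.induce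
      {q : {Q : Finset V // IsMaximalClique G Q} | v ∈ (q : Finset V)}).Connected := by
    intro v
    have hconn := hT.2 v
    haveI : Nonempty {q : {Q : Finset V // IsMaximalClique G Q} | v ∈ (q : Finset V)} :=
      hconn.nonempty
    refine ⟨?_⟩
    intro a b
    apply reach_of_adj_reach (A := T.induce _) ?_ (hconn.preconnected a b)
    intro x y hxy
    have hxy' : T.Adj ↑x ↑y := hxy
    by_cases heq : s((x : {Q : Finset V // IsMaximalClique G Q}), (y : _)) = s(Q, Q2)
    · have hvQ : v ∈ (Q : Finset V) ∧ v ∈ (Q2 : Finset V) := by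
        rw [Sym2.eq_iff] at heq
        rcases heq with ⟨hx, hy⟩ | ⟨hx, hy⟩
        · exact ⟨hx ▸ x.2, hy ▸ y.2⟩
        · exact ⟨hy ▸ y.2, hx ▸ x.2⟩
      have hvQ1 : v ∈ (Q1 : Finset V) := by
        have : v ∈ (Q : Finset V) ∩ (Q2 : Finset V) := Finset.mem_inter.2 hvQ
        rw [← hSS] at this
        exact (Finset.mem_inter.1 this).2
      have hz : (Q1 : {Q : Finset V // IsMaximalClique G Q}) ∈
          {q : {Q : Finset V // IsMaximalClique G Q} | v ∈ (q : Finset V)} := hvQ1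
      rw [Sym2.eq_iff] at heq
      rcases heq with ⟨hx, hy⟩ | ⟨hx, hy⟩
      · have r1 : (T'.induce _).Adj x ⟨Q1, hz⟩ := by
          show T'.Adj ↑x Q1
          rw [hx]; exact hadjQ1'
        have r2 : (T'.induce _).Adj (⟨Q1, hz⟩ :
            {q : {Q : Finset V // IsMaximalClique G Q} // v ∈ (q : Finset V)}) y := by
          show T'.Adj Q1 ↑y
          rw [hy]; exact hadj12'
        exact r1.reachable.trans r2.reachable
      · have r1 : (T'.induce _).Adj x ⟨Q1, hz⟩ := by
          show T'.Adj ↑x Q1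
          rw [hx]; exact hadj12'.symm
        have r2 : (T'.induce _).Adj (⟨Q1, hz⟩ :
            {q : {Q : Finset V // IsMaximalClique G Q} // v ∈ (q : Finset V)}) y := by
          show T'.Adj Q1 ↑y
          rw [hy]; exact hadjQ1'.symm
        exact r1.reachable.trans r2.reachable
    · apply Adj.reachable
      show T'.Adj ↑x ↑y
      exact (hT'adj _ _).2 (Or.inl ⟨hxy', heq⟩)
  have hT' : IsCliqueTree G T' := ⟨⟨hconn', hacy'⟩, hind'⟩
  have := hU T' hT'
  rw [this] at hnadjQ2'
  exact hnadjQ2' hadj2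

lemma simplicial_unique_clique {v : V} (hs : IsSimplicial G v) {Q R : Finset V}
    (hQ : IsMaximalClique G Q) (hR : IsMaximalClique G R) (hvQ : v ∈ Q) (hvR : v ∈ R) :
    Q = R := by
  classical
  set N : Finset V := insert v ((Set.toFinite (G.neighborSet v)).toFinset) with hN
  have hmemN : ∀ x, x ∈ N ↔ x = v ∨ G.Adj v x := by
    intro x
    simp [hN, Set.Finite.mem_toFinset, mem_neighborSet]
  have hNcl : G.IsClique (N : Set V) := by
    intro x hx y hy hxy
    rw [Finset.mem_coe, hmemN] at hx hy
    rcases hx with rfl | hx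
    · rcases hy with rfl | hy
      · exact absurd rfl hxy
      · exact hy
    · rcases hy with rfl | hy
      · exact hx.symm
      · exact hs hx hy hxy
  have hsub : ∀ {P : Finset V}, IsMaximalClique G P → v ∈ P → P = N := by
    intro P hP hvP
    apply hP.2 _ hNcl
    intro w hw
    rw [hmemN]
    rcases eq_or_ne w v with rfl | hne
    · exact Or.inl rfl
    · exact Or.inr (hP.1 hvP hw (fun h => hne h.symm))
  rw [hsub hQ hvQ, hsub hR hvR]

lemma simplicial_of_unique_clique {v : V} {Q : Finset V} (hQ : IsMaximalClique G Q)
    (huniq : ∀ R : Finset V, IsMaximalClique G R → v ∈ R → R = Q) : IsSimplicial G v := by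
  intro x hx y hy hxy
  obtain ⟨Rx, hRx, hvRx, hxRx⟩ := edge_maxclique (hx : G.Adj v x)
  obtain ⟨Ry, hRy, hvRy, hyRy⟩ := edge_maxclique (hy : G.Adj v y)
  have hx' : x ∈ Q := (huniq Rx hRx hvRx) ▸ hxRx
  have hy' : y ∈ Q := (huniq Ry hRy hvRy) ▸ hyRy
  exact hQ.1 hx' hy' hxy

lemma walk_first_step {α : Type*} {W : SimpleGraph α} {a b : α} (hab : a ≠ b)
    (r : W.Reachable a b) : ∃ c, W.Adj a c := by
  obtain ⟨p⟩ := r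
  cases p with
  | nil => exact absurd rfl hab
  | cons h q => exact ⟨_, h⟩

lemma exists_tree_neighbor (h1 : H1 G e) (h2 : H2 G e) (hn5 : 5 ≤ Fintype.card V)
    (hT : IsCliqueTree G T) (Q : {Q : Finset V // IsMaximalClique G Q}) :
    ∃ Q', T.Adj Q Q' := by
  have hcard := card_maxcliques (G := G) h1 h2 (by omega)
  haveI : Nontrivial {Q : Finset V // IsMaximalClique G Q} := by
    classical
    rw [Nat.card_eq_fintype_card] at hcard
    exact Fintype.one_lt_card_iff_nontrivial.1 (by omega)
  obtain ⟨R, hR⟩ := exists_ne Q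
  exact walk_first_step (Ne.symm hR) (hT.1.isConnected.preconnected Q R)

lemma leaf_unique_neighbor {Q : {Q : Finset V // IsMaximalClique G Q}}
    (hdeg : deg T Q = 1) : ∃ Q', T.Adj Q Q' ∧ ∀ R, T.Adj Q R → R = Q' := by
  obtain ⟨Q', hset⟩ := Set.ncard_eq_one.1 hdeg
  have hadj : T.Adj Q Q' := by
    have : Q' ∈ {r | T.Adj Q r} := hset ▸ Set.mem_singleton Q'
    exact this
  exact ⟨Q', hadj, fun R hR => by
    have : R ∈ ({Q'} : Set _) := hset ▸ hR
    exact this⟩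

lemma leaf_simplicial (h1 : H1 G e) (h2 : H2 G e) (hn : 4 ≤ Fintype.card V)
    (hT : IsCliqueTree G T) {Q : {Q : Finset V // IsMaximalClique G Q}}
    (hdeg : deg T Q = 1) :
    ∃ x, x ∈ (Q : Finset V) ∧ IsSimplicial G x ∧
      (∀ y ∈ (Q : Finset V), IsSimplicial G y → y = x) := by
  obtain ⟨Q', hadj, huniq⟩ := leaf_unique_neighbor hdeg
  have hcard3 := (tree_edge_inter h1 h2 hn hT hadj).1
  have hQ4 : (Q : Finset V).card = 4 := maxclique_card h1 h2 hn Q.2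
  have hsd : ((Q : Finset V) \ (Q' : Finset V)).card = 1 := by
    have := Finset.card_sdiff_add_card_inter (Q : Finset V) (Q' : Finset V)
    omega
  obtain ⟨x, hx⟩ := Finset.card_eq_one.1 hsd
  have hxmem : x ∈ (Q : Finset V) \ (Q' : Finset V) := hx ▸ Finset.mem_singleton_self x
  have hxQ : x ∈ (Q : Finset V) := (Finset.mem_sdiff.1 hxmem).1
  have hxQ' : x ∉ (Q' : Finset V) := (Finset.mem_sdiff.1 hxmem).2
  have huniqclique : ∀ R : Finset V, IsMaximalClique G R → x ∈ R → R = (Q : Finset V) := by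
    intro R hR hxR
    by_contra hne'
    have hne2 : (⟨Q, hxQ⟩ : {q : {Q : Finset V // IsMaximalClique G Q} // x ∈ (q : Finset V)})
        ≠ ⟨⟨R, hR⟩, hxR⟩ := by
      intro h
      apply hne'
      have := congrArg (fun z => ((z : {q : {Q : Finset V // IsMaximalClique G Q} //
        x ∈ (q : Finset V)}) : {Q : Finset V // IsMaximalClique G Q}).1) h
      exact this.symm
    obtain ⟨c, hc⟩ := walk_first_step hne2 ((hT.2 x).preconnected _ _)
    have hcadj : T.Adj Q ↑c := hc
    have := huniq ↑c hcadj
    apply hxQ'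
    rw [← this]
    exact c.2
  refine ⟨x, hxQ, simplicial_of_unique_clique Q.2 huniqclique, ?_⟩
  intro y hyQ hys
  have hyQ' : y ∉ (Q' : Finset V) := by
    intro hyQ'
    have := simplicial_unique_clique hys Q.2 Q'.2 hyQ hyQ'
    exact hadj.ne (Subtype.ext this)
  have : y ∈ (Q : Finset V) \ (Q' : Finset V) := Finset.mem_sdiff.2 ⟨hyQ, hyQ'⟩
  rw [hx, Finset.mem_singleton] at this
  exact this

lemma simplicial_clique_leaf (h1 : H1 G e) (h2 : H2 G e) (hn5 : 5 ≤ Fintype.card V)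
    (hU : ∀ T' : SimpleGraph {Q : Finset V // IsMaximalClique G Q}, IsCliqueTree G T' → T' = T)
    (hT : IsCliqueTree G T) {v : V} (hs : IsSimplicial G v)
    {Q : {Q : Finset V // IsMaximalClique G Q}} (hvQ : v ∈ (Q : Finset V)) :
    deg T Q = 1 := by
  have hn : 4 ≤ Fintype.card V := by omega
  obtain ⟨Q', hadj⟩ := exists_tree_neighbor h1 h2 hn5 hT Q
  have hQ4 : (Q : Finset V).card = 4 := maxclique_card h1 h2 hn Q.2
  have hinter : ∀ R : {Q : Finset V // IsMaximalClique G Q}, T.Adj Q R →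
      (Q : Finset V) ∩ (R : Finset V) = (Q : Finset V).erase v := by
    intro R hR
    have hvR : v ∉ (R : Finset V) := by
      intro hvR
      have := simplicial_unique_clique hs Q.2 R.2 hvQ hvR
      exact hR.ne (Subtype.ext this)
    have hsub : (Q : Finset V) ∩ (R : Finset V) ⊆ (Q : Finset V).erase v := by
      intro z hz
      rw [Finset.mem_erase]
      rw [Finset.mem_inter] at hz
      exact ⟨fun h => hvR (h ▸ hz.2), hz.1⟩
    apply Finset.eq_of_subset_of_card_le hsub
    rw [Finset.card_erase_of_mem hvQ, hQ4, (tree_edge_inter h1 h2 hn hT hR).1]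
  have hall : ∀ R : {Q : Finset V // IsMaximalClique G Q}, T.Adj Q R → R = Q' := by
    intro R hR
    by_contra hne'
    exact neighbor_inter_inj hU hT hR hadj hne' (by rw [hinter R hR, hinter Q' hadj])
  show ({r | T.Adj Q r} : Set _).ncard = 1
  have : {r | T.Adj Q r} = {Q'} := by
    ext r
    exact ⟨fun h => hall r h, fun h => by rw [Set.mem_singleton_iff] at h; exact h ▸ hadj⟩
  rw [this, Set.ncard_singleton]

end RanProof

open RanProof in
/-- Structure of the clique-tree of a non-complete RAN. -/
theorem ran_cliqueTree_structure {V : Type*} [Fintype V] [DecidableEq V]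
    (G : SimpleGraph V) (hG : IsRAN G) (hnc : G ≠ ⊤)
    (T : SimpleGraph {Q : Finset V // IsMaximalClique G Q}) (hT : IsCliqueTree G T) :
    Nat.card {Q : Finset V // IsMaximalClique G Q} = Fintype.card V - 3 ∧
    T.edgeSet.ncard = Fintype.card V - 4 ∧
    {q : {Q : Finset V // IsMaximalClique G Q} | deg T q = 1}.ncard
      = {v : V | IsSimplicial G v}.ncard ∧
    (∀ v : V,
      (∀ q : {Q : Finset V // IsMaximalClique G Q}, v ∈ (q : Finset V) → deg T q ≠ 1) →
      ∃ S : Finset V, IsMinVtxSep G S ∧ v ∈ S) ∧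
    (∀ q : {Q : Finset V // IsMaximalClique G Q}, deg T q ≤ 4) := by
  classical
  obtain ⟨hn4, e, h1, h2⟩ := isKTree_iff.1 hG.1
  have hU : ∀ T' : SimpleGraph {Q : Finset V // IsMaximalClique G Q},
      IsCliqueTree G T' → T' = T := fun T' h' => hG.2.unique h' hT
  have hn5 : 5 ≤ Fintype.card V := five_le_card h1 hn4 hnc
  have hpart1 : Nat.card {Q : Finset V // IsMaximalClique G Q} = Fintype.card V - 3 :=
    card_maxcliques (G := G) h1 h2 hn4
  refine ⟨hpart1, ?_, ?_, ?_, ?_⟩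
  · -- edge count
    haveI : Fintype {Q : Finset V // IsMaximalClique G Q} := Fintype.ofFinite _
    haveI : DecidableRel T.Adj := Classical.decRel _
    have hedge := hT.1.card_edgeFinset
    have hncard : T.edgeSet.ncard = T.edgeFinset.card := by
      rw [SimpleGraph.edgeFinset, Set.ncard_eq_toFinset_card']
    have hcards : Fintype.card {Q : Finset V // IsMaximalClique G Q} = Fintype.card V - 3 := by
      rw [← Nat.card_eq_fintype_card]; exact hpart1
    rw [hncard]
    omega
  · -- leaves vs simplicial vertices
    haveI : Nonempty V := Fintype.card_pos_iff.1 (by omega)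
    set f : {Q : Finset V // IsMaximalClique G Q} → V := fun q =>
      if h : ∃ x, x ∈ (q : Finset V) ∧ IsSimplicial G x then h.choose
      else Classical.arbitrary V with hf
    have hfmem : ∀ q : {Q : Finset V // IsMaximalClique G Q},
        (∃ x, x ∈ (q : Finset V) ∧ IsSimplicial G x) →
        f q ∈ (q : Finset V) ∧ IsSimplicial G (f q) := by
      intro q h
      rw [hf]
      simp only [dif_pos h]
      exact h.choose_spec
    have hmaps : ∀ q ∈ {q : {Q : Finset V // IsMaximalClique G Q} | deg T q = 1},
        f q ∈ {v : V | IsSimplicial G v} := by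
      intro q hq
      obtain ⟨x, hxq, hxs, -⟩ := leaf_simplicial h1 h2 hn4 hT hq
      exact (hfmem q ⟨x, hxq, hxs⟩).2
    have hinj : Set.InjOn f {q : {Q : Finset V // IsMaximalClique G Q} | deg T q = 1} := by
      intro q1 hq1 q2 hq2 heq
      obtain ⟨x1, hx1q, hx1s, -⟩ := leaf_simplicial h1 h2 hn4 hT hq1
      obtain ⟨x2, hx2q, hx2s, -⟩ := leaf_simplicial h1 h2 hn4 hT hq2
      have hm1 := hfmem q1 ⟨x1, hx1q, hx1s⟩
      have hm2 := hfmem q2 ⟨x2, hx2q, hx2s⟩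
      apply Subtype.ext
      exact simplicial_unique_clique hm1.2 q1.2 q2.2 hm1.1 (heq ▸ hm2.1)
    have hsurj : Set.SurjOn f {q : {Q : Finset V // IsMaximalClique G Q} | deg T q = 1}
        {v : V | IsSimplicial G v} := by
      intro v hv
      obtain ⟨Qf, hQf, hvQf⟩ := vertex_maxclique (G := G) v
      have hleaf : deg T ⟨Qf, hQf⟩ = 1 := simplicial_clique_leaf h1 h2 hn5 hU hT hv hvQf
      refine ⟨⟨Qf, hQf⟩, hleaf, ?_⟩
      obtain ⟨x, hxq, hxs, hxu⟩ := leaf_simplicial h1 h2 hn4 hT hleaf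
      have hm := hfmem ⟨Qf, hQf⟩ ⟨x, hxq, hxs⟩
      have h1' := hxu _ hm.1 hm.2
      have h2' := hxu v hvQf hv
      rw [h1', ← h2']
    have himg : f '' {q : {Q : Finset V // IsMaximalClique G Q} | deg T q = 1}
        = {v : V | IsSimplicial G v} :=
      Set.BijOn.image_eq ⟨hmaps, hinj, hsurj⟩
    rw [← himg, Set.ncard_image_of_injOn hinj]
  · -- internal vertices lie in minimal separators
    intro v hv
    obtain ⟨Q0f, hQ0f, hvQ0⟩ := vertex_maxclique (G := G) v
    by_cases hmulti : ∃ R : {Q : Finset V // IsMaximalClique G Q},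
        v ∈ (R : Finset V) ∧ R ≠ (⟨Q0f, hQ0f⟩ : {Q : Finset V // IsMaximalClique G Q})
    · obtain ⟨R, hvR, hRne⟩ := hmulti
      have hne2 : (⟨⟨Q0f, hQ0f⟩, hvQ0⟩ :
          {q : {Q : Finset V // IsMaximalClique G Q} // v ∈ (q : Finset V)}) ≠ ⟨R, hvR⟩ := by
        intro h
        exact hRne (congrArg Subtype.val h).symm
      obtain ⟨c, hc⟩ := walk_first_step hne2 ((hT.2 v).preconnected _ _)
      have hadj : T.Adj ⟨Q0f, hQ0f⟩ ↑c := hc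
      refine ⟨Q0f ∩ ((c : {Q : Finset V // IsMaximalClique G Q}) : Finset V),
        minsep_of_tree_edge h1 h2 hn4 hT hadj, ?_⟩
      exact Finset.mem_inter.2 ⟨hvQ0, c.2⟩
    · push_neg at hmulti
      have huniq : ∀ Rf : Finset V, IsMaximalClique G Rf → v ∈ Rf → Rf = Q0f :=
        fun Rf hRf hvRf => congrArg Subtype.val (hmulti ⟨Rf, hRf⟩ hvRf)
      have hs := simplicial_of_unique_clique hQ0f huniq
      have hleaf := simplicial_clique_leaf h1 h2 hn5 hU hT hs (Q := ⟨Q0f, hQ0f⟩) hvQ0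
      exact absurd hleaf (hv ⟨Q0f, hQ0f⟩ hvQ0)
  · -- degree at most 4
    intro q
    have hQ4 : (q : Finset V).card = 4 := maxclique_card h1 h2 hn4 q.2
    show ({r | T.Adj q r} : Set _).ncard ≤ 4
    have hmap : ∀ r ∈ {r : {Q : Finset V // IsMaximalClique G Q} | T.Adj q r},
        (fun r : {Q : Finset V // IsMaximalClique G Q} => (q : Finset V) ∩ (r : Finset V)) r
          ∈ (((q : Finset V).powersetCard 3 : Finset (Finset V)) : Set (Finset V)) := by
      intro r hr
      rw [Finset.mem_coe, Finset.mem_powersetCard]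
      exact ⟨Finset.inter_subset_left, (tree_edge_inter h1 h2 hn4 hT hr).1⟩
    have hinj : Set.InjOn
        (fun r : {Q : Finset V // IsMaximalClique G Q} => (q : Finset V) ∩ (r : Finset V))
        {r | T.Adj q r} := by
      intro r1 hr1 r2 hr2 heq
      by_contra hne
      exact neighbor_inter_inj hU hT hr1 hr2 hne heq
    have hle := Set.ncard_le_ncard_of_injOn _ hmap hinj (Set.toFinite _)
    rw [Set.ncard_coe_finset, Finset.card_powersetCard, hQ4] at hle
    exact hle
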